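/- arXiv:2603.03894 — 2 statements merged into one kernel-verified Lean document; each statement's English description precedes it below -/
import Mathlib

section
/- Let G be a finite simple graph, T a maximal tubing of G, and t ∈ T a tube that is not a singleton. Then the set of inclusion-maximal elements of { s ∈ T : s ⊊ t } has cardinality one or two. If it equals {s₁}, then V(t) = V(s₁) and E(t) = E(s₁) ∪ {e} for a single edge e. If it equals {s₁, s₂}, then s₁ and s₂ are disjoint and t is the union of s₁ and s₂ together with a single edge e joining a vertex of s₁ to a vertex of s₂, i.e. V(t) = V(s₁) ∪ V(s₂) and E(t) = E(s₁) ∪ E(s₂) ∪ {e}. -/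
set_option linter.unusedSectionVars false
set_option linter.unusedVariables false

open Finset

variable {V : Type} [Fintype V] [DecidableEq V]

/-- A tube of the finite simple graph on vertex type `V` with edge set `E`: a nonempty
connected (not necessarily induced) subgraph, recorded by its vertex and edge sets. -/
structure Tube (E : Finset (Sym2 V)) where
  verts : Finset V
  edges : Finset (Sym2 V)
  nonempty : verts.Nonempty
  edges_sub : edges ⊆ E
  endpoints_mem : ∀ e ∈ edges, ∀ v ∈ e, v ∈ verts
  conn : ∀ u ∈ verts, ∀ w ∈ verts,
    Relation.ReflTransGen (fun a b => s(a, b) ∈ edges) u w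

theorem Tube.ext' {E : Finset (Sym2 V)} {a b : Tube E}
    (h1 : a.verts = b.verts) (h2 : a.edges = b.edges) : a = b := by
  cases a; cases b; subst h1; subst h2; rfl

instance {E : Finset (Sym2 V)} : DecidableEq (Tube E) := fun a b =>
  decidable_of_iff (a.verts = b.verts ∧ a.edges = b.edges)
    ⟨fun h => Tube.ext' h.1 h.2, fun h => by subst h; exact ⟨rfl, rfl⟩⟩

/-- Tubes are partially ordered by inclusion: `t₁ ⊆ t₂` iff
`V(t₁) ⊆ V(t₂)` and `E(t₁) ⊆ E(t₂)`. -/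
instance {E : Finset (Sym2 V)} : PartialOrder (Tube E) where
  le a b := a.verts ⊆ b.verts ∧ a.edges ⊆ b.edges
  le_refl a := ⟨Finset.Subset.refl _, Finset.Subset.refl _⟩
  le_trans a b c h₁ h₂ := ⟨h₁.1.trans h₂.1, h₁.2.trans h₂.2⟩
  le_antisymm a b h₁ h₂ :=
    Tube.ext' (Finset.Subset.antisymm h₁.1 h₂.1) (Finset.Subset.antisymm h₁.2 h₂.2)

/-- A singleton tube: a single vertex and no edges. -/
def Tube.IsSingleton {E : Finset (Sym2 V)} (t : Tube E) : Prop :=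
  ∃ v : V, t.verts = {v} ∧ t.edges = ∅

/-- A tubing: a set of tubes, any two of which are disjoint or nested. -/
def IsTubing (E : Finset (Sym2 V)) (T : Finset (Tube E)) : Prop :=
  ∀ t₁ ∈ T, ∀ t₂ ∈ T,
    Disjoint t₁.verts t₂.verts ∨ t₁.edges ⊆ t₂.edges ∨ t₂.edges ⊆ t₁.edges

/-- A maximal tubing: a tubing maximal under inclusion. -/
def IsMaxTubing (E : Finset (Sym2 V)) (T : Finset (Tube E)) : Prop :=
  IsTubing E T ∧ ∀ T' : Finset (Tube E), IsTubing E T' → T ⊆ T' → T' = T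

-- AUX START

instance {E : Finset (Sym2 V)} : @DecidableRel (Tube E) (Tube E) (· ≤ ·) := fun a b =>
  decidable_of_iff (a.verts ⊆ b.verts ∧ a.edges ⊆ b.edges) Iff.rfl

lemma tube_le_def {E : Finset (Sym2 V)} {a b : Tube E} :
    a ≤ b ↔ a.verts ⊆ b.verts ∧ a.edges ⊆ b.edges := Iff.rfl

/-- Every vertex of a tube with a nonempty edge set lies on some edge. -/
lemma Tube.exists_edge {E : Finset (Sym2 V)} (s : Tube E) (hne : s.edges.Nonempty)
    {v : V} (hv : v ∈ s.verts) : ∃ e ∈ s.edges, v ∈ e := by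
  obtain ⟨e₀, he₀⟩ := hne
  induction e₀ using Sym2.ind with
  | _ p q =>
    have hp : p ∈ s.verts := s.endpoints_mem _ he₀ p (Sym2.mem_mk_left p q)
    have h := s.conn v hv p hp
    rcases Relation.ReflTransGen.cases_head h with h | ⟨c, hc, _⟩
    · subst h; exact ⟨s(v, q), he₀, Sym2.mem_mk_left v q⟩
    · exact ⟨s(v, c), hc, Sym2.mem_mk_left v c⟩

/-- A tube with no edges is a singleton. -/
lemma Tube.isSingleton_of_edges_empty {E : Finset (Sym2 V)} (s : Tube E)
    (h : s.edges = ∅) : s.IsSingleton := by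
  obtain ⟨v, hv⟩ := s.nonempty
  refine ⟨v, ?_, h⟩
  ext w
  simp only [Finset.mem_singleton]
  constructor
  · intro hw
    have hc := s.conn w hw v hv
    induction hc with
    | refl => rfl
    | tail _ hstep ih => simp [h] at hstep
  · rintro rfl; exact hv

lemma Tube.edges_nonempty_of_not_singleton {E : Finset (Sym2 V)} (s : Tube E)
    (h : ¬ s.IsSingleton) : s.edges.Nonempty := by
  rcases Finset.eq_empty_or_nonempty s.edges with he | he
  · exact absurd (s.isSingleton_of_edges_empty he) h
  · exact he

/-- Edge containment plus vertex intersection implies containment. -/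
lemma Tube.le_of_edges_subset {E : Finset (Sym2 V)} {s u : Tube E}
    (h : s.edges ⊆ u.edges) (hnd : ¬ Disjoint s.verts u.verts) : s ≤ u := by
  refine ⟨fun v hv => ?_, h⟩
  rcases Finset.eq_empty_or_nonempty s.edges with he | he
  · obtain ⟨w, hw, hempty⟩ := s.isSingleton_of_edges_empty he
    obtain ⟨x, hx, hxu⟩ := Finset.not_disjoint_iff.1 hnd
    rw [hw, Finset.mem_singleton] at hv hx
    subst hv; subst hx; exact hxu
  · obtain ⟨e, heS, hve⟩ := s.exists_edge he hv
    exact u.endpoints_mem e (h heS) v hve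

/-- Two intersecting tubes in a tubing are comparable. -/
lemma comparable_of_not_disjoint {E : Finset (Sym2 V)} {T : Finset (Tube E)}
    (hT : IsTubing E T) {s u : Tube E} (hs : s ∈ T) (hu : u ∈ T)
    (hnd : ¬ Disjoint s.verts u.verts) : s ≤ u ∨ u ≤ s := by
  rcases hT s hs u hu with h | h | h
  · exact absurd h hnd
  · exact Or.inl (Tube.le_of_edges_subset h hnd)
  · exact Or.inr (Tube.le_of_edges_subset h (fun hd => hnd hd.symm))

def singleTube (E : Finset (Sym2 V)) (v : V) : Tube E where
  verts := {v}
  edges := ∅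
  nonempty := ⟨v, Finset.mem_singleton_self v⟩
  edges_sub := Finset.empty_subset _
  endpoints_mem := by simp
  conn := by
    intro u hu w hw
    simp only [Finset.mem_singleton] at hu hw
    subst hu; subst hw; exact Relation.ReflTransGen.refl

lemma singleTube_mem {E : Finset (Sym2 V)} {T : Finset (Tube E)}
    (hT : IsMaxTubing E T) (v : V) : singleTube E v ∈ T := by
  have htub : IsTubing E (insert (singleTube E v) T) := by
    intro t₁ h₁ t₂ h₂
    rcases Finset.mem_insert.1 h₁ with rfl | h₁
    · exact Or.inr (Or.inl (Finset.empty_subset _))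
    rcases Finset.mem_insert.1 h₂ with rfl | h₂
    · exact Or.inr (Or.inr (Finset.empty_subset _))
    · exact hT.1 t₁ h₁ t₂ h₂
  have := hT.2 _ htub (Finset.subset_insert _ _)
  rw [← this]
  exact Finset.mem_insert_self _ _


instance {E : Finset (Sym2 V)} : @DecidableRel (Tube E) (Tube E) (· < ·) := fun a b =>
  decidable_of_iff (a ≤ b ∧ ¬ b ≤ a) lt_iff_le_not_ge.symm

lemma exists_maximal_above {E : Finset (Sym2 V)} {T : Finset (Tube E)} {t : Tube E}
    {s₀ : Tube E} (hs₀ : s₀ ∈ T) (hlt : s₀ < t) :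
    ∃ m : Tube E, Maximal (fun s => s ∈ T ∧ s < t) m ∧ s₀ ≤ m := by
  classical
  set F := (T.filter (fun s => s < t)).filter (fun s => s₀ ≤ s) with hF
  have hs₀F : s₀ ∈ F := by
    simp only [hF, Finset.mem_filter]
    exact ⟨⟨hs₀, hlt⟩, le_refl _⟩
  obtain ⟨m, hmF, hmax⟩ : ∃ m ∈ F, ∀ x ∈ F, ¬ m < x := by
    obtain ⟨m, hm⟩ := Finset.exists_maximal (s := F) ⟨s₀, hs₀F⟩
    exact ⟨m, hm.1, fun x hx hlt => lt_irrefl m (lt_of_lt_of_le hlt (hm.2 hx hlt.le))⟩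
  simp only [hF, Finset.mem_filter] at hmF
  refine ⟨m, ⟨⟨hmF.1.1, hmF.1.2⟩, ?_⟩, hmF.2⟩
  intro b hb hmb
  by_contra hbm
  exact hmax b (by simp only [hF, Finset.mem_filter]; exact ⟨⟨hb.1, hb.2⟩, hmF.2.trans hmb⟩)
    (lt_of_le_not_ge hmb hbm)

lemma maximal_eq_of_not_disjoint {E : Finset (Sym2 V)} {T : Finset (Tube E)} {t : Tube E}
    (hT : IsTubing E T) {m₁ m₂ : Tube E}
    (h₁ : Maximal (fun s => s ∈ T ∧ s < t) m₁) (h₂ : Maximal (fun s => s ∈ T ∧ s < t) m₂)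
    (hnd : ¬ Disjoint m₁.verts m₂.verts) : m₁ = m₂ := by
  rcases comparable_of_not_disjoint hT h₁.1.1 h₂.1.1 hnd with h | h
  · exact le_antisymm h (h₁.2 h₂.1 h)
  · exact le_antisymm (h₂.2 h₁.1 h) h

lemma vertex_cover {E : Finset (Sym2 V)} {T : Finset (Tube E)} {t : Tube E}
    (hT : IsMaxTubing E T) (hsing : ¬ t.IsSingleton) {v : V} (hv : v ∈ t.verts) :
    ∃ m : Tube E, Maximal (fun s => s ∈ T ∧ s < t) m ∧ v ∈ m.verts := by
  have hmem := singleTube_mem hT v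
  have hlt : singleTube E v < t := by
    refine lt_of_le_of_ne ⟨Finset.singleton_subset_iff.2 hv, Finset.empty_subset _⟩ ?_
    intro h
    exact hsing ⟨v, by rw [← h]; exact ⟨rfl, rfl⟩⟩
  obtain ⟨m, hm, hle⟩ := exists_maximal_above hmem hlt
  exact ⟨m, hm, hle.1 (Finset.mem_singleton_self v)⟩

/-- Key dichotomy: a tube of `T` meeting a maximal proper subtube of `t` either has its
edges inside it, or contains all edges of `t`. -/
lemma key_dichotomy {E : Finset (Sym2 V)} {T : Finset (Tube E)} {t : Tube E}
    (hT : IsTubing E T) (ht : t ∈ T) {s m : Tube E} (hs : s ∈ T)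
    (hm : Maximal (fun s => s ∈ T ∧ s < t) m) (hnd : ¬ Disjoint s.verts m.verts) :
    s.edges ⊆ m.edges ∨ t.edges ⊆ s.edges := by
  rcases comparable_of_not_disjoint hT hs hm.1.1 hnd with h | h
  · exact Or.inl h.2
  · have hndst : ¬ Disjoint s.verts t.verts := by
      obtain ⟨x, hx⟩ := m.nonempty
      exact Finset.not_disjoint_iff.2 ⟨x, h.1 hx, hm.1.2.le.1 hx⟩
    rcases comparable_of_not_disjoint hT hs ht hndst with h' | h'
    · by_cases hst : s = t
      · exact Or.inr (hst ▸ le_refl _)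
      · exact Or.inl (hm.2 ⟨hs, lt_of_le_of_ne h' hst⟩ h).2
    · exact Or.inr h'.2

lemma exists_outside_edge {E : Finset (Sym2 V)} {T : Finset (Tube E)} {t : Tube E}
    (hT : IsMaxTubing E T) (ht : t ∈ T) (hsing : ¬ t.IsSingleton) :
    ∃ e ∈ t.edges, ∀ m : Tube E, Maximal (fun s => s ∈ T ∧ s < t) m → e ∉ m.edges := by
  by_contra hcon
  push_neg at hcon
  have hcov : ∀ e ∈ t.edges, ∃ m : Tube E, Maximal (fun s => s ∈ T ∧ s < t) m ∧ e ∈ m.edges := by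
    intro e he
    obtain ⟨m, hm, hmem⟩ := hcon e he
    exact ⟨m, hm, hmem⟩
  obtain ⟨e₀, he₀⟩ := t.edges_nonempty_of_not_singleton hsing
  obtain ⟨m₀, hm₀, he₀m₀⟩ := hcov e₀ he₀
  -- all vertices of t lie in m₀
  have hverts : t.verts ⊆ m₀.verts := by
    intro w hw
    induction e₀ using Sym2.ind with
    | _ p q =>
      have hp : p ∈ m₀.verts := m₀.endpoints_mem _ he₀m₀ p (Sym2.mem_mk_left p q)
      have hpt : p ∈ t.verts := t.endpoints_mem _ he₀ p (Sym2.mem_mk_left p q)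
      have hc := t.conn p hpt w hw
      clear he₀ he₀m₀
      induction hc with
      | refl => exact hp
      | @tail b c hbc hstep ih =>
        obtain ⟨m, hm, hmem⟩ := hcov _ hstep
        have hb : b ∈ m.verts := m.endpoints_mem _ hmem b (Sym2.mem_mk_left b c)
        have : m = m₀ :=
          maximal_eq_of_not_disjoint hT.1 hm hm₀ (Finset.not_disjoint_iff.2 ⟨b, hb, ih (t.endpoints_mem _ hstep b (Sym2.mem_mk_left b c))⟩)
        exact this ▸ m.endpoints_mem _ hmem c (Sym2.mem_mk_right b c)
  have hedges : t.edges ⊆ m₀.edges := by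
    intro e he
    obtain ⟨m, hm, hmem⟩ := hcov e he
    induction e using Sym2.ind with
    | _ p q =>
      have hp : p ∈ m.verts := m.endpoints_mem _ hmem p (Sym2.mem_mk_left p q)
      have hpt : p ∈ t.verts := t.endpoints_mem _ he p (Sym2.mem_mk_left p q)
      have : m = m₀ :=
        maximal_eq_of_not_disjoint hT.1 hm hm₀ (Finset.not_disjoint_iff.2 ⟨p, hp, hverts hpt⟩)
      exact this ▸ hmem
  exact absurd (lt_of_lt_of_le hm₀.1.2 ⟨hverts, hedges⟩) (lt_irrefl _)

/-- Adding an edge between two vertices of a tube. -/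
def addEdgeTube (E : Finset (Sym2 V)) (s : Tube E) (a b : V)
    (ha : a ∈ s.verts) (hb : b ∈ s.verts) (hmem : s(a, b) ∈ E) : Tube E where
  verts := s.verts
  edges := insert s(a, b) s.edges
  nonempty := s.nonempty
  edges_sub := Finset.insert_subset hmem s.edges_sub
  endpoints_mem := by
    intro x hx v hv
    rcases Finset.mem_insert.1 hx with rfl | hx
    · rcases Sym2.mem_iff.1 hv with rfl | rfl
      · exact ha
      · exact hb
    · exact s.endpoints_mem x hx v hv
  conn := by
    intro u hu w hw
    exact Relation.ReflTransGen.mono (fun x y hxy => Finset.mem_insert_of_mem hxy)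
      _ _ (s.conn u hu w hw)

/-- Gluing two tubes along a new edge. -/
def glueTube (E : Finset (Sym2 V)) (s₁ s₂ : Tube E) (a b : V)
    (ha : a ∈ s₁.verts) (hb : b ∈ s₂.verts) (hmem : s(a, b) ∈ E) : Tube E where
  verts := s₁.verts ∪ s₂.verts
  edges := insert s(a, b) (s₁.edges ∪ s₂.edges)
  nonempty := s₁.nonempty.mono Finset.subset_union_left
  edges_sub := Finset.insert_subset hmem
    (Finset.union_subset s₁.edges_sub s₂.edges_sub)
  endpoints_mem := by
    intro x hx v hv
    rcases Finset.mem_insert.1 hx with rfl | hx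
    · rcases Sym2.mem_iff.1 hv with rfl | rfl
      · exact Finset.mem_union_left _ ha
      · exact Finset.mem_union_right _ hb
    · rcases Finset.mem_union.1 hx with hx | hx
      · exact Finset.mem_union_left _ (s₁.endpoints_mem x hx v hv)
      · exact Finset.mem_union_right _ (s₂.endpoints_mem x hx v hv)
  conn := by
    intro u hu w hw
    have lift₁ : ∀ {x y : V}, x ∈ s₁.verts → y ∈ s₁.verts →
        Relation.ReflTransGen (fun p q => s(p, q) ∈ insert s(a, b) (s₁.edges ∪ s₂.edges)) x y :=
      fun hx hy => Relation.ReflTransGen.mono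
        (fun p q hpq => Finset.mem_insert_of_mem (Finset.mem_union_left _ hpq))
        _ _ (s₁.conn _ hx _ hy)
    have lift₂ : ∀ {x y : V}, x ∈ s₂.verts → y ∈ s₂.verts →
        Relation.ReflTransGen (fun p q => s(p, q) ∈ insert s(a, b) (s₁.edges ∪ s₂.edges)) x y :=
      fun hx hy => Relation.ReflTransGen.mono
        (fun p q hpq => Finset.mem_insert_of_mem (Finset.mem_union_right _ hpq))
        _ _ (s₂.conn _ hx _ hy)
    have step : s(a, b) ∈ insert s(a, b) (s₁.edges ∪ s₂.edges) := Finset.mem_insert_self _ _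
    have step' : s(b, a) ∈ insert s(a, b) (s₁.edges ∪ s₂.edges) := by
      rw [Sym2.eq_swap (a := b) (b := a)]; exact step
    rcases Finset.mem_union.1 hu with hu' | hu' <;> rcases Finset.mem_union.1 hw with hw' | hw'
    · exact lift₁ hu' hw'
    · exact ((lift₁ hu' ha).tail step).trans (lift₂ hb hw')
    · exact ((lift₂ hu' hb).tail step').trans (lift₁ ha hw')
    · exact lift₂ hu' hw'

lemma addEdgeTube_verts {E : Finset (Sym2 V)} (s : Tube E) (a b : V) (ha hb hmem) :
    (addEdgeTube E s a b ha hb hmem).verts = s.verts := rfl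

lemma addEdgeTube_edges {E : Finset (Sym2 V)} (s : Tube E) (a b : V) (ha hb hmem) :
    (addEdgeTube E s a b ha hb hmem).edges = insert s(a, b) s.edges := rfl

lemma glueTube_verts {E : Finset (Sym2 V)} (s₁ s₂ : Tube E) (a b : V) (ha hb hmem) :
    (glueTube E s₁ s₂ a b ha hb hmem).verts = s₁.verts ∪ s₂.verts := rfl

lemma glueTube_edges {E : Finset (Sym2 V)} (s₁ s₂ : Tube E) (a b : V) (ha hb hmem) :
    (glueTube E s₁ s₂ a b ha hb hmem).edges = insert s(a, b) (s₁.edges ∪ s₂.edges) := rfl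

/-- Let `G` be a finite simple graph, `T` a maximal tubing and `t ∈ T`
not a singleton. Then the set of inclusion-maximal elements of `{ s ∈ T : s ⊊ t }` has
one or two elements. In the first case `{s₁}`, `V(t) = V(s₁)` and `E(t) = E(s₁) ∪ {e}`
for a single edge `e`; in the second case `{s₁, s₂}`, the tubes `s₁, s₂` are disjoint
and `t` is their union together with a single edge joining a vertex of `s₁` to a vertex
of `s₂`. -/
theorem statement6 (E : Finset (Sym2 V)) (hE : ∀ e ∈ E, ¬ e.IsDiag)
    (T : Finset (Tube E)) (hT : IsMaxTubing E T)
    (t : Tube E) (ht : t ∈ T) (hsing : ¬ t.IsSingleton) :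
    (∃ s₁ : Tube E, {s : Tube E | Maximal (fun s => s ∈ T ∧ s < t) s} = {s₁} ∧
        t.verts = s₁.verts ∧
        ∃ e : Sym2 V, e ∉ s₁.edges ∧ t.edges = insert e s₁.edges) ∨
    (∃ s₁ s₂ : Tube E, s₁ ≠ s₂ ∧
        {s : Tube E | Maximal (fun s => s ∈ T ∧ s < t) s} = {s₁, s₂} ∧
        Disjoint s₁.verts s₂.verts ∧
        ∃ a b : V, a ∈ s₁.verts ∧ b ∈ s₂.verts ∧ s(a, b) ∉ s₁.edges ∪ s₂.edges ∧
          t.verts = s₁.verts ∪ s₂.verts ∧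
          t.edges = insert s(a, b) (s₁.edges ∪ s₂.edges)) := by
  classical
  obtain ⟨e, he, hout⟩ := exists_outside_edge hT ht hsing
  induction e using Sym2.ind with
  | _ a b =>
  have hEe : s(a, b) ∈ E := t.edges_sub he
  have hat : a ∈ t.verts := t.endpoints_mem _ he a (Sym2.mem_mk_left a b)
  have hbt : b ∈ t.verts := t.endpoints_mem _ he b (Sym2.mem_mk_right a b)
  obtain ⟨ma, hma, hama⟩ := vertex_cover hT hsing hat
  obtain ⟨mb, hmb, hbmb⟩ := vertex_cover hT hsing hbt
  by_cases hcase : ma = mb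
  · -- one maximal element
    obtain rfl := hcase.symm
    left
    set m' := addEdgeTube E mb a b hama hbmb hEe with hm'def
    have hm'edges : m'.edges = insert s(a, b) mb.edges := rfl
    have hm'verts : m'.verts = mb.verts := rfl
    have hsubT : m'.edges ⊆ t.edges := by
      rw [hm'edges]
      exact Finset.insert_subset he hmb.1.2.le.2
    have hpair : ∀ s ∈ T, Disjoint m'.verts s.verts ∨ m'.edges ⊆ s.edges ∨
        s.edges ⊆ m'.edges := by
      intro s hsT
      by_cases hd : Disjoint s.verts mb.verts
      · exact Or.inl (hm'verts ▸ hd.symm)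
      · rcases key_dichotomy hT.1 ht hsT hmb hd with h | h
        · refine Or.inr (Or.inr ?_)
          rw [hm'edges]
          exact h.trans (Finset.subset_insert _ _)
        · exact Or.inr (Or.inl (hsubT.trans h))
    have htub : IsTubing E (insert m' T) := by
      intro t₁ h₁ t₂ h₂
      rcases Finset.mem_insert.1 h₁ with rfl | h₁
      · rcases Finset.mem_insert.1 h₂ with rfl | h₂
        · exact Or.inr (Or.inl (Finset.Subset.refl _))
        · exact hpair t₂ h₂
      · rcases Finset.mem_insert.1 h₂ with rfl | h₂
        · rcases hpair t₁ h₁ with h | h | h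
          · exact Or.inl h.symm
          · exact Or.inr (Or.inr h)
          · exact Or.inr (Or.inl h)
        · exact hT.1 t₁ h₁ t₂ h₂
    have hm'T : m' ∈ T := by
      have := hT.2 _ htub (Finset.subset_insert _ _)
      rw [← this]; exact Finset.mem_insert_self _ _
    have hm'le : m' ≤ t := ⟨hm'verts.le.trans hmb.1.2.le.1, hsubT⟩
    have hm'eq : m' = t := by
      by_contra hne
      have hlem : m' ≤ mb := hmb.2 ⟨hm'T, lt_of_le_of_ne hm'le hne⟩
        ⟨hm'verts.ge.trans (Finset.Subset.refl _), by rw [hm'edges]; exact Finset.subset_insert _ _⟩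
      have : s(a, b) ∈ mb.edges := hlem.2 (by rw [hm'edges]; exact Finset.mem_insert_self _ _)
      exact hout mb hmb this
    have htverts : t.verts = mb.verts := by rw [← hm'eq, hm'verts]
    have htedges : t.edges = insert s(a, b) mb.edges := by rw [← hm'eq, hm'edges]
    refine ⟨mb, ?_, htverts, s(a, b), hout mb hmb, htedges⟩
    ext s
    simp only [Set.mem_setOf_eq, Set.mem_singleton_iff]
    constructor
    · intro hs
      obtain ⟨x, hx⟩ := s.nonempty
      have hxmb : x ∈ mb.verts := htverts ▸ hs.1.2.le.1 hx
      exact maximal_eq_of_not_disjoint hT.1 hs hmb (Finset.not_disjoint_iff.2 ⟨x, hx, hxmb⟩)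
    · rintro rfl; exact hmb
  · -- two maximal elements
    right
    have hdisj : Disjoint ma.verts mb.verts := by
      by_contra h
      exact hcase (maximal_eq_of_not_disjoint hT.1 hma hmb h)
    set m' := glueTube E ma mb a b hama hbmb hEe with hm'def
    have hm'edges : m'.edges = insert s(a, b) (ma.edges ∪ mb.edges) := rfl
    have hm'verts : m'.verts = ma.verts ∪ mb.verts := rfl
    have hsubT : m'.edges ⊆ t.edges := by
      rw [hm'edges]
      exact Finset.insert_subset he (Finset.union_subset hma.1.2.le.2 hmb.1.2.le.2)
    have hpair : ∀ s ∈ T, Disjoint m'.verts s.verts ∨ m'.edges ⊆ s.edges ∨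
        s.edges ⊆ m'.edges := by
      intro s hsT
      by_cases hd : Disjoint s.verts m'.verts
      · exact Or.inl hd.symm
      · obtain ⟨x, hxs, hxm⟩ := Finset.not_disjoint_iff.1 hd
        rw [hm'verts, Finset.mem_union] at hxm
        rcases hxm with hxm | hxm
        · rcases key_dichotomy hT.1 ht hsT hma
              (Finset.not_disjoint_iff.2 ⟨x, hxs, hxm⟩) with h | h
          · refine Or.inr (Or.inr ?_)
            rw [hm'edges]
            exact h.trans ((Finset.subset_union_left).trans (Finset.subset_insert _ _))
          · exact Or.inr (Or.inl (hsubT.trans h))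
        · rcases key_dichotomy hT.1 ht hsT hmb
              (Finset.not_disjoint_iff.2 ⟨x, hxs, hxm⟩) with h | h
          · refine Or.inr (Or.inr ?_)
            rw [hm'edges]
            exact h.trans ((Finset.subset_union_right).trans (Finset.subset_insert _ _))
          · exact Or.inr (Or.inl (hsubT.trans h))
    have htub : IsTubing E (insert m' T) := by
      intro t₁ h₁ t₂ h₂
      rcases Finset.mem_insert.1 h₁ with rfl | h₁
      · rcases Finset.mem_insert.1 h₂ with rfl | h₂
        · exact Or.inr (Or.inl (Finset.Subset.refl _))
        · exact hpair t₂ h₂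
      · rcases Finset.mem_insert.1 h₂ with rfl | h₂
        · rcases hpair t₁ h₁ with h | h | h
          · exact Or.inl h.symm
          · exact Or.inr (Or.inr h)
          · exact Or.inr (Or.inl h)
        · exact hT.1 t₁ h₁ t₂ h₂
    have hm'T : m' ∈ T := by
      have := hT.2 _ htub (Finset.subset_insert _ _)
      rw [← this]; exact Finset.mem_insert_self _ _
    have hm'le : m' ≤ t :=
      ⟨hm'verts.le.trans (Finset.union_subset hma.1.2.le.1 hmb.1.2.le.1), hsubT⟩
    have hm'eq : m' = t := by
      by_contra hne
      have hlem : m' ≤ ma := hma.2 ⟨hm'T, lt_of_le_of_ne hm'le hne⟩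
        ⟨(Finset.subset_union_left).trans hm'verts.ge,
          ((Finset.subset_union_left).trans (Finset.subset_insert _ _)).trans hm'edges.ge⟩
      have : s(a, b) ∈ ma.edges := hlem.2 (by rw [hm'edges]; exact Finset.mem_insert_self _ _)
      exact hout ma hma this
    have htverts : t.verts = ma.verts ∪ mb.verts := by rw [← hm'eq, hm'verts]
    have htedges : t.edges = insert s(a, b) (ma.edges ∪ mb.edges) := by
      rw [← hm'eq, hm'edges]
    have hnotedge : s(a, b) ∉ ma.edges ∪ mb.edges := by
      intro h
      rcases Finset.mem_union.1 h with h | h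
      · exact hout ma hma h
      · exact hout mb hmb h
    refine ⟨ma, mb, hcase, ?_, hdisj, a, b, hama, hbmb, hnotedge, htverts, htedges⟩
    ext s
    simp only [Set.mem_setOf_eq, Set.mem_insert_iff, Set.mem_singleton_iff]
    constructor
    · intro hs
      obtain ⟨x, hx⟩ := s.nonempty
      have hxt : x ∈ ma.verts ∪ mb.verts := htverts ▸ hs.1.2.le.1 hx
      rcases Finset.mem_union.1 hxt with hxm | hxm
      · exact Or.inl (maximal_eq_of_not_disjoint hT.1 hs hma
          (Finset.not_disjoint_iff.2 ⟨x, hx, hxm⟩))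
      · exact Or.inr (maximal_eq_of_not_disjoint hT.1 hs hmb
          (Finset.not_disjoint_iff.2 ⟨x, hx, hxm⟩))
    · rintro (rfl | rfl)
      · exact hma
      · exact hmb
end

section
/- Let G be a finite simple graph, T a maximal tubing of G, and t ∈ T a tube that is not a singleton. Then there exists a unique edge e ∈ E(t) such that for every τ ∈ T one has e ∈ E(τ) if and only if t ⊆ τ (we say t introduces e). -/
set_option linter.unusedSectionVars false
set_option linter.unusedVariables false

open Finset

variable {V : Type} [Fintype V] [DecidableEq V]

/-! ### Auxiliary lemmas -/

lemma empty_edges_reach {edges : Finset (Sym2 V)} (h : edges = ∅) {u w : V}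
    (hr : Relation.ReflTransGen (fun a b => s(a, b) ∈ edges) u w) : u = w := by
  induction hr with
  | refl => rfl
  | tail hab hbc ih => subst h; simp at hbc

lemma Tube.edges_nonempty' {E : Finset (Sym2 V)} {t : Tube E}
    (h : ¬ t.IsSingleton) : t.edges.Nonempty := by
  rcases Finset.eq_empty_or_nonempty t.edges with he | he
  · obtain ⟨v, hv⟩ := t.nonempty
    refine absurd ⟨v, Finset.eq_singleton_iff_unique_mem.2 ⟨hv, fun w hw => ?_⟩, he⟩ h
    exact (empty_edges_reach he (t.conn v hv w hw)).symm
  · exact he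

lemma Tube.mem_edge {E : Finset (Sym2 V)} (hE : ∀ e ∈ E, ¬ e.IsDiag) {t : Tube E} {v : V}
    (hv : v ∈ t.verts) (hne : t.edges.Nonempty) : ∃ e ∈ t.edges, v ∈ e := by
  obtain ⟨e, he⟩ := hne
  have hwex : ∃ w ∈ t.verts, w ≠ v := by
    set x := e.out.1 with hx
    set y := e.out.2 with hy
    have hxy : x ≠ y := by
      intro h
      refine hE e (t.edges_sub he) ?_
      have : e = s(x, y) := by rw [hx, hy, Sym2.mk, e.out_eq]
      rw [this, h]; exact Sym2.mk_isDiag_iff.2 rfl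
    by_cases hvx : v = x
    · exact ⟨y, t.endpoints_mem e he y e.out_snd_mem, fun h => hxy (hvx ▸ h.symm ▸ rfl)⟩
    · exact ⟨x, t.endpoints_mem e he x e.out_fst_mem, fun h => hvx h.symm⟩
  obtain ⟨w, hw, hwv⟩ := hwex
  rcases (t.conn v hv w hw).cases_head with h | ⟨b, hb, _⟩
  · exact absurd h.symm hwv
  · exact ⟨s(v, b), hb, by simp⟩

lemma le_of_edges_subset {E : Finset (Sym2 V)} (hE : ∀ e ∈ E, ¬ e.IsDiag) {a b : Tube E}
    (hne : a.edges.Nonempty) (h : a.edges ⊆ b.edges) : a ≤ b := by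
  refine ⟨fun v hv => ?_, h⟩
  obtain ⟨e, he, hve⟩ := Tube.mem_edge hE hv hne
  exact b.endpoints_mem e (h he) v hve

lemma bridge_lemma {r : V → V → Prop} {W : Finset V} {u : V} (hu : u ∈ W) :
    ∀ {w : V}, Relation.ReflTransGen r u w → w ∉ W → ∃ a b, a ∈ W ∧ b ∉ W ∧ r a b := by
  intro w hr
  induction hr with
  | refl => exact fun hw => absurd hu hw
  | @tail b c hab hbc ih =>
    intro hw
    by_cases hb : b ∈ W
    · exact ⟨b, c, hb, hw, hbc⟩
    · exact ih hb

/-- Let `G` be a finite simple graph, `T` a maximal tubing of `G`, and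
`t ∈ T` a tube that is not a singleton. Then there exists a unique edge `e ∈ E(t)` such
that for every `τ ∈ T` one has `e ∈ E(τ)` if and only if `t ⊆ τ` (`t` introduces `e`). -/
theorem statement7 (E : Finset (Sym2 V)) (hE : ∀ e ∈ E, ¬ e.IsDiag)
    (T : Finset (Tube E)) (hT : IsMaxTubing E T)
    (t : Tube E) (ht : t ∈ T) (hsing : ¬ t.IsSingleton) :
    ∃! e : Sym2 V, e ∈ t.edges ∧ ∀ τ ∈ T, (e ∈ τ.edges ↔ t ≤ τ) := by
  classical
  obtain ⟨hTub, hMax⟩ := hT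
  have htne : t.edges.Nonempty := Tube.edges_nonempty' hsing
  have nest : ∀ τ ∈ T, ∀ σ ∈ T, ∀ v, v ∈ τ.verts → v ∈ σ.verts →
      τ.edges ⊆ σ.edges ∨ σ.edges ⊆ τ.edges := by
    intro τ hτ σ hσ v hv hv'
    rcases hTub τ hτ σ hσ with hd | h | h
    · exact absurd hv' (Finset.disjoint_left.1 hd hv)
    · exact Or.inl h
    · exact Or.inr h
  -- Existence
  have exist : ∃ e ∈ t.edges, ∀ τ ∈ T, e ∈ τ.edges → t.edges ⊆ τ.edges := by
    by_contra hcon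
    push_neg at hcon
    have cover : ∀ e ∈ t.edges, ∃ τ ∈ T, e ∈ τ.edges ∧ τ.edges ⊆ t.edges ∧
        ¬ t.edges ⊆ τ.edges := by
      intro e he
      obtain ⟨τ, hτT, heτ, hns⟩ := hcon e he
      have hx : e.out.1 ∈ t.verts := t.endpoints_mem e he _ e.out_fst_mem
      have hx' : e.out.1 ∈ τ.verts := τ.endpoints_mem e heτ _ e.out_fst_mem
      rcases nest t ht τ hτT e.out.1 hx hx' with h | h
      · exact absurd h hns
      · exact ⟨τ, hτT, heτ, h, hns⟩
    set S := T.filter (fun τ => τ.edges ⊆ t.edges ∧ ¬ t.edges ⊆ τ.edges) with hS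
    obtain ⟨e0, he0⟩ := htne
    obtain ⟨τ0, hτ0T, h01, h02, h03⟩ := cover e0 he0
    have hSne : S.Nonempty := ⟨τ0, Finset.mem_filter.2 ⟨hτ0T, h02, h03⟩⟩
    obtain ⟨c, hcS, hcmax⟩ := Finset.exists_max_image S (fun τ => τ.edges.card) hSne
    obtain ⟨hcT, hcsub, hcns⟩ : c ∈ T ∧ c.edges ⊆ t.edges ∧ ¬ t.edges ⊆ c.edges := by
      have := Finset.mem_filter.1 hcS
      exact ⟨this.1, this.2.1, this.2.2⟩
    have hced : c.edges.Nonempty := by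
      refine Finset.card_pos.1 (lt_of_lt_of_le (Finset.card_pos.2 ⟨e0, h01⟩) ?_)
      exact hcmax τ0 (Finset.mem_filter.2 ⟨hτ0T, h02, h03⟩)
    obtain ⟨e', he't, he'c⟩ := Finset.not_subset.1 hcns
    obtain ⟨τ', hτ'T, hτ'1, hτ'2, hτ'3⟩ := cover e' he't
    have hτ'S : τ' ∈ S := Finset.mem_filter.2 ⟨hτ'T, hτ'2, hτ'3⟩
    have hnotc : ∀ v ∈ e', v ∉ c.verts := by
      intro v hve hvc
      have hv' : v ∈ τ'.verts := τ'.endpoints_mem _ hτ'1 v hve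
      rcases nest c hcT τ' hτ'T v hvc hv' with h | h
      · have hlt : c.edges ⊂ τ'.edges :=
          (Finset.ssubset_iff_of_subset h).2 ⟨e', hτ'1, he'c⟩
        exact absurd (Finset.card_lt_card hlt) (not_lt.2 (hcmax τ' hτ'S))
      · exact he'c (h hτ'1)
    obtain ⟨u, hu⟩ := c.nonempty
    have huT : u ∈ t.verts := by
      obtain ⟨ec, hec, huec⟩ := Tube.mem_edge hE hu hced
      exact t.endpoints_mem ec (hcsub hec) u huec
    have hwe : e'.out.1 ∈ e' := e'.out_fst_mem
    have hwT : e'.out.1 ∈ t.verts := t.endpoints_mem _ he't _ hwe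
    have hwc : e'.out.1 ∉ c.verts := hnotc _ hwe
    obtain ⟨a, b, haW, hbW, hab⟩ := bridge_lemma hu (t.conn u huT _ hwT) hwc
    obtain ⟨τ'', hτ''T, k1, k2, k3⟩ := cover s(a, b) hab
    have hτ''S : τ'' ∈ S := Finset.mem_filter.2 ⟨hτ''T, k2, k3⟩
    have ha' : a ∈ τ''.verts := τ''.endpoints_mem _ k1 a (by simp)
    have hsab : s(a, b) ∉ c.edges := fun hin => hbW (c.endpoints_mem _ hin b (by simp))
    rcases nest c hcT τ'' hτ''T a haW ha' with h | h
    · have hlt : c.edges ⊂ τ''.edges := (Finset.ssubset_iff_of_subset h).2 ⟨s(a, b), k1, hsab⟩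
      exact absurd (Finset.card_lt_card hlt) (not_lt.2 (hcmax τ'' hτ''S))
    · exact hsab (h k1)
  -- Uniqueness
  have uniq : ∀ e1 ∈ t.edges, ∀ e2 ∈ t.edges,
      (∀ τ ∈ T, e1 ∈ τ.edges → t.edges ⊆ τ.edges) →
      (∀ τ ∈ T, e2 ∈ τ.edges → t.edges ⊆ τ.edges) → e1 = e2 := by
    intro e1 he1 e2 he2 hp1 hp2
    by_contra hne12
    set r : V → V → Prop := fun a b => s(a, b) ∈ t.edges.erase e1 with hr
    have hv0e2 : e2.out.1 ∈ e2 := e2.out_fst_mem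
    set v0 := e2.out.1 with hv0
    have he2er : e2 ∈ t.edges.erase e1 := Finset.mem_erase.2 ⟨fun h => hne12 h.symm, he2⟩
    set W : Finset V := Finset.univ.filter (fun w => Relation.ReflTransGen r v0 w) with hW
    have memW : ∀ w, w ∈ W ↔ Relation.ReflTransGen r v0 w := by
      intro w; simp [hW]
    have hv0W : v0 ∈ W := (memW v0).2 .refl
    have Wclosed : ∀ a ∈ W, ∀ b, r a b → b ∈ W := fun a ha b hab =>
      (memW b).2 (((memW a).1 ha).tail hab)
    set F : Finset (Sym2 V) := (t.edges.erase e1).filter (fun e => ∀ v ∈ e, v ∈ W) with hF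
    have hv0t : v0 ∈ t.verts := t.endpoints_mem e2 he2 v0 hv0e2
    have hWsub : ∀ w ∈ W, w ∈ t.verts := by
      intro w hw
      have hrt := (memW w).1 hw
      clear hw
      induction hrt with
      | refl => exact hv0t
      | @tail b c hab hbc ih =>
        exact t.endpoints_mem _ (Finset.mem_erase.1 hbc).2 c (by simp)
    have pathF : ∀ w ∈ W, Relation.ReflTransGen (fun a b => s(a, b) ∈ F) v0 w := by
      intro w hw
      have hrt := (memW w).1 hw
      clear hw
      induction hrt with
      | refl => exact .refl
      | @tail b c hab hbc ih =>
        have hbWm : b ∈ W := (memW b).2 hab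
        have hcWm : c ∈ W := (memW c).2 (hab.tail hbc)
        refine ih.tail (Finset.mem_filter.2 ⟨hbc, ?_⟩)
        intro v hv
        rcases Sym2.mem_iff.1 hv with h | h <;> subst h <;> assumption
    have hFs : Symmetric (fun a b => s(a, b) ∈ F) := fun a b h => by
      show s(b, a) ∈ F
      rw [Sym2.eq_swap]; exact h
    have hconn : ∀ u ∈ W, ∀ w ∈ W, Relation.ReflTransGen (fun a b => s(a, b) ∈ F) u w := by
      intro u hu w hw
      exact ((by haveI : Std.Symm (fun a b => s(a, b) ∈ F) := ⟨fun a b h => hFs h⟩; exact Std.Symm.symm (r := Relation.ReflTransGen (fun a b => s(a, b) ∈ F)) _ _ (pathF u hu) : Relation.ReflTransGen (fun a b => s(a, b) ∈ F) u v0)).trans (pathF w hw)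
    set t'' : Tube E := {
      verts := W
      edges := F
      nonempty := ⟨v0, hv0W⟩
      edges_sub := fun e he => t.edges_sub (Finset.mem_erase.1 (Finset.mem_filter.1 he).1).2
      endpoints_mem := fun e he v hv => (Finset.mem_filter.1 he).2 v hv
      conn := hconn } with ht''
    have he2F : e2 ∈ F := by
      refine Finset.mem_filter.2 ⟨he2er, ?_⟩
      obtain ⟨b, hb⟩ := Sym2.mem_iff_exists.1 hv0e2
      intro v hv
      rw [hb] at hv
      rcases Sym2.mem_iff.1 hv with h | h
      · subst h; exact hv0W
      · subst h
        refine Wclosed v0 hv0W _ ?_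
        show s(v0, v) ∈ t.edges.erase e1
        rw [← hb]; exact he2er
    have he1F : e1 ∉ F := fun h => (Finset.mem_erase.1 (Finset.mem_filter.1 h).1).1 rfl
    have hcompat : ∀ τ ∈ T, Disjoint W τ.verts ∨ F ⊆ τ.edges ∨ τ.edges ⊆ F := by
      intro τ hτ
      rcases hTub t ht τ hτ with hd | hsub | hsup
      · exact Or.inl (Finset.disjoint_left.2 fun v hvW hvτ =>
          (Finset.disjoint_left.1 hd (hWsub v hvW)) hvτ)
      · exact Or.inr (Or.inl fun e he =>
          hsub (Finset.mem_erase.1 (Finset.mem_filter.1 he).1).2)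
      · by_cases h1τ : e1 ∈ τ.edges
        · have hts : t.edges ⊆ τ.edges := hp1 τ hτ h1τ
          exact Or.inr (Or.inl fun e he =>
            hts (Finset.mem_erase.1 (Finset.mem_filter.1 he).1).2)
        · have hτer : τ.edges ⊆ t.edges.erase e1 := fun e he =>
            Finset.mem_erase.2 ⟨fun h => h1τ (h ▸ he), hsup he⟩
          by_cases hint : ∃ v ∈ τ.verts, v ∈ W
          · obtain ⟨v, hvτ, hvW⟩ := hint
            have hτW : ∀ w ∈ τ.verts, w ∈ W := by
              intro w hw
              have hpath := τ.conn v hvτ w hw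
              clear hw
              induction hpath with
              | refl => exact hvW
              | @tail b c hab hbc ih => exact Wclosed b ih c (hτer hbc)
            refine Or.inr (Or.inr fun e he => Finset.mem_filter.2 ⟨hτer he, ?_⟩)
            exact fun v' hv' => hτW v' (τ.endpoints_mem e he v' hv')
          · push_neg at hint
            exact Or.inl (Finset.disjoint_left.2 fun v hvW hvτ => hint v hvτ hvW)
    have hTub' : IsTubing E (insert t'' T) := by
      intro t₁ h₁ t₂ h₂
      rcases Finset.mem_insert.1 h₁ with rfl | h₁' <;>
        rcases Finset.mem_insert.1 h₂ with rfl | h₂'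
      · exact Or.inr (Or.inl (Finset.Subset.refl _))
      · rcases hcompat t₂ h₂' with h | h | h
        · exact Or.inl h
        · exact Or.inr (Or.inl h)
        · exact Or.inr (Or.inr h)
      · rcases hcompat t₁ h₁' with h | h | h
        · exact Or.inl h.symm
        · exact Or.inr (Or.inr h)
        · exact Or.inr (Or.inl h)
      · exact hTub t₁ h₁' t₂ h₂'
    have heq := hMax (insert t'' T) hTub' (Finset.subset_insert _ _)
    have ht''T : t'' ∈ T := heq ▸ Finset.mem_insert_self t'' T
    have hsub := hp2 t'' ht''T he2F
    exact he1F (hsub he1)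
  obtain ⟨e, heT, hintro⟩ := exist
  refine ⟨e, ⟨heT, fun τ hτ =>
    ⟨fun h => le_of_edges_subset hE htne (hintro τ hτ h), fun h => h.2 heT⟩⟩, ?_⟩
  intro y hy
  exact uniq y hy.1 e heT (fun τ hτ hyτ => ((hy.2 τ hτ).1 hyτ).2) hintro
end
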